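/- Let $D$ be a division ring containing a field $K$ in its center, and let $D_1 \subseteq D_2 \subseteq D$ be division subrings containing $K$, each finitely generated as a division algebra over $K$. If $D_1$ is infinite-dimensional as a left $K$-vector space and $D_2$ is infinite-dimensional as a left $D_1$-vector space, then $\mathrm{GKdim}(D_2) \ge 2$. -/

import Mathlib

set_option synthInstance.maxHeartbeats 1000000
set_option maxHeartbeats 1000000


open Filter

/-- The GK growth exponent `limsup_n log(dim V^n)/log n` (in `EReal`) of a
finite-dimensional subspace `V` of a `K`-algebra. -/
noncomputable def gkWrt (K : Type*) {Q : Type*} [Field K] [Ring Q] [Algebra K Q]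
    (V : Submodule K Q) : EReal :=
  Filter.limsup
    (fun n : ℕ => ((Real.log (Module.finrank K ↥(V ^ n)) / Real.log n : ℝ) : EReal)) atTop

/-- The GK dimension of a subset `D` of a `K`-algebra `Q`: the supremum of GK growth
exponents over finite-dimensional subspaces `V ⊆ D` with `1 ∈ V`. -/
noncomputable def gkOfSet (K : Type*) {Q : Type*} [Field K] [Ring Q] [Algebra K Q]
    (D : Set Q) : EReal :=
  sSup { x : EReal | ∃ V : Submodule K Q, FiniteDimensional K ↥V ∧ (1 : Q) ∈ V ∧
    (V : Set Q) ⊆ D ∧ x = gkWrt K V }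

/-- `E` is a division subring of `Q` containing (the image of) `K`. -/
def IsDivSub {K Q : Type*} [Field K] [DivisionRing Q] [Algebra K Q] (E : Subring Q) : Prop :=
  (∀ c : K, algebraMap K Q c ∈ E) ∧ (∀ x ∈ E, x⁻¹ ∈ E)

/-- `E` is generated, as a division algebra over `K`, by the finite set `S`. -/
def IsDivGenBy {K Q : Type*} [Field K] [DivisionRing Q] [Algebra K Q]
    (E : Subring Q) (S : Finset Q) : Prop :=
  IsDivSub (K := K) E ∧ (S : Set Q) ⊆ E ∧
    ∀ E' : Subring Q, IsDivSub (K := K) E' → (S : Set Q) ⊆ E' → E ≤ E'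

section Aux
open Filter Submodule
variable {K D : Type*} [Field K] [DivisionRing D] [Algebra K D]

def subringSubmodule (E : Subring D) (hE : ∀ c : K, algebraMap K D c ∈ E) : Submodule K D where
  carrier := E
  add_mem' := fun h1 h2 => add_mem h1 h2
  zero_mem' := zero_mem E
  smul_mem' := fun c x hx => by
    rw [Algebra.smul_def]; exact mul_mem (hE c) hx

lemma pow_subset_subring (E : Subring D) (hE : ∀ c : K, algebraMap K D c ∈ E)
    (W : Submodule K D) (hW : (W : Set D) ⊆ E) (n : ℕ) :
    ((W ^ n : Submodule K D) : Set D) ⊆ E := by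
  have : W ^ n ≤ subringSubmodule E hE := by
    induction n with
    | zero =>
      rw [pow_zero]
      exact Submodule.one_le.mpr (E.one_mem)
    | succ n ih =>
      rw [pow_succ]
      exact Submodule.mul_le.mpr fun m hm v hv => E.mul_mem (ih hm) (hW hv)
  exact this

lemma pow_mono_exp {W : Submodule K D} (h1 : (1 : D) ∈ W) {m n : ℕ} (h : m ≤ n) :
    W ^ m ≤ W ^ n := by
  induction h with
  | refl => exact le_rfl
  | step h ih =>
    refine le_trans ih ?_
    rw [pow_succ]
    intro x hx
    simpa using Submodule.mul_mem_mul hx h1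

lemma one_mem_pow {W : Submodule K D} (h1 : (1 : D) ∈ W) (n : ℕ) :
    (1 : D) ∈ W ^ n := by
  have h0 : (1 : D) ∈ W ^ 0 := by rw [pow_zero]; exact Submodule.one_le.mp le_rfl
  exact pow_mono_exp h1 (Nat.zero_le n) h0

lemma pow_mono_base {W W' : Submodule K D} (h : W ≤ W') (n : ℕ) : W ^ n ≤ W' ^ n := by
  induction n with
  | zero => simp
  | succ n ih =>
    rw [pow_succ, pow_succ]
    exact Submodule.mul_le.mpr fun m hm v hv => Submodule.mul_mem_mul (ih hm) (h hv)

@[reducible]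
noncomputable def subDivisionRing (E : Subring D) (h : ∀ x ∈ E, x⁻¹ ∈ E) :
    DivisionRing ↥E :=
  { (inferInstance : Ring ↥E) with
    inv := fun x => ⟨(↑x)⁻¹, h x x.2⟩
    mul_inv_cancel := fun a ha => by
      have : (↑a : D) ≠ 0 := fun hc => ha (Subtype.ext hc)
      exact Subtype.ext (by simpa using mul_inv_cancel₀ this)
    inv_zero := Subtype.ext (by simp)
    nnqsmul := _
    qsmul := _ }

/-- Key lemma B: powers of `U` (spanning a set generating `D₁` as a division ring)
never stabilize over `K`, since `D₁` is infinite-dimensional over `K`. -/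
lemma keyB (D₁ : Subring D) (hD₁ : IsDivSub (K := K) D₁) (S₁ : Finset D)
    (hgen : IsDivGenBy (K := K) D₁ S₁)
    (hinf₁ : ¬ ∃ s : Finset D, (s : Set D) ⊆ D₁ ∧ ∀ q ∈ D₁, ∃ c : D → K,
      q = ∑ x ∈ s, algebraMap K D (c x) * x)
    (U : Submodule K D) (hU1 : (1 : D) ∈ U) (hUD : (U : Set D) ⊆ D₁)
    (hS₁U : (S₁ : Set D) ⊆ U) (hfg : U.FG) (n : ℕ)
    (hstab : (U ^ (n + 1) : Submodule K D) ≤ U ^ n) : False := by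
  -- all higher powers collapse
  have hcollapse : ∀ k, U ^ (n + k) ≤ U ^ n := by
    intro k
    induction k with
    | zero => exact le_rfl
    | succ k ih =>
      rw [show n + (k+1) = (n + k) + 1 from rfl, pow_succ]
      refine Submodule.mul_le.mpr fun x hx y hy => ?_
      exact hstab (by rw [pow_succ]; exact Submodule.mul_mem_mul (ih hx) hy)
  have hUn1 : (1 : D) ∈ U ^ n := one_mem_pow hU1 n
  have hclosed : ∀ x ∈ U ^ n, ∀ y ∈ U ^ n, x * y ∈ (U ^ n : Submodule K D) := by
    intro x hx y hy
    have : x * y ∈ U ^ n * U ^ n := Submodule.mul_mem_mul hx hy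
    rw [← pow_add] at this
    exact hcollapse n this
  -- the subring `A` with carrier `U ^ n`
  set A : Subring D :=
    { carrier := (U ^ n : Submodule K D)
      mul_mem' := fun hx hy => hclosed _ hx _ hy
      one_mem' := hUn1
      add_mem' := fun hx hy => add_mem hx hy
      zero_mem' := zero_mem _
      neg_mem' := fun hx => neg_mem hx } with hA
  have hmemA : ∀ x : D, x ∈ A ↔ x ∈ (U ^ n : Submodule K D) := fun x => Iff.rfl
  have halgA : ∀ c : K, algebraMap K D c ∈ A := by
    intro c
    rw [hmemA, Algebra.algebraMap_eq_smul_one]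
    exact Submodule.smul_mem _ c hUn1
  haveI : Module.Finite K ↥(U ^ n : Submodule K D) := Module.Finite.iff_fg.mpr (hfg.pow n)
  have hinvA : ∀ x ∈ A, x⁻¹ ∈ A := by
    intro x hx
    rcases eq_or_ne x 0 with rfl | hx0
    · simpa using A.zero_mem
    · rw [hmemA] at hx ⊢
      let φ : ↥(U ^ n : Submodule K D) →ₗ[K] ↥(U ^ n : Submodule K D) :=
        { toFun := fun y => ⟨x * ↑y, hclosed x hx _ y.2⟩
          map_add' := fun y z => Subtype.ext (by simp [mul_add])
          map_smul' := fun c y => Subtype.ext (by simp [Algebra.mul_smul_comm]) }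
      have hinj : Function.Injective φ := by
        intro y z h
        have := congrArg Subtype.val h
        exact Subtype.ext (mul_left_cancel₀ hx0 this)
      obtain ⟨y, hy⟩ := (LinearMap.injective_iff_surjective.mp hinj) ⟨1, hUn1⟩
      have hxy : x * ↑y = 1 := congrArg Subtype.val hy
      rw [inv_eq_of_mul_eq_one_right hxy]
      exact y.2
  -- minimality gives D₁ ≤ A
  have hU_le : U ≤ (U ^ n : Submodule K D) := by
    cases n with
    | zero => rw [← pow_one U]; exact hstab
    | succ n => exact le_trans (by rw [pow_one]) (pow_mono_exp hU1 (Nat.one_le_iff_ne_zero.mpr (Nat.succ_ne_zero n)))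
  have hD₁A : D₁ ≤ A := hgen.2.2 A ⟨halgA, hinvA⟩ (fun x hx => hU_le (hS₁U hx))
  -- contradiction with infinite-dimensionality
  obtain ⟨s, hs⟩ := hfg.pow n
  refine hinf₁ ⟨s, ?_, ?_⟩
  · intro x hx
    have : x ∈ (U ^ n : Submodule K D) := hs ▸ Submodule.subset_span hx
    exact pow_subset_subring D₁ hD₁.1 U hUD n this
  · intro q hq
    have : q ∈ Submodule.span K (s : Set D) := by rw [hs]; exact hD₁A hq
    obtain ⟨f, hf⟩ := mem_span_finset.mp this
    exact ⟨f, by rw [← hf.2]; exact Finset.sum_congr rfl fun x _ => (Algebra.smul_def _ _)⟩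

/-- Key lemma A: the `D₁`-span of powers of `V` never stabilizes, since `D₂` is
infinite-dimensional as a left `D₁`-vector space. -/
lemma keyA (D₁ D₂ : Subring D) (hD₁ : IsDivSub (K := K) D₁) (S₂ : Finset D)
    (hgen₂ : IsDivGenBy (K := K) D₂ S₂)
    (hinf₂ : ¬ ∃ s : Finset D, (s : Set D) ⊆ D₂ ∧ ∀ q ∈ D₂, ∃ c : D → D,
      (∀ x ∈ s, c x ∈ D₁) ∧ q = ∑ x ∈ s, c x * x)
    (V : Submodule K D) (hV1 : (1 : D) ∈ V) (hVD : (V : Set D) ⊆ D₂)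
    (hS₂V : (S₂ : Set D) ⊆ V) (hfg : V.FG) (n : ℕ)
    (hstab : ((V ^ (n + 1) : Submodule K D) : Set D) ⊆
      (Submodule.span ↥D₁ ((V ^ n : Submodule K D) : Set D) : Set D)) : False := by
  letI : DivisionRing ↥D₁ := subDivisionRing D₁ hD₁.2
  set M : Submodule ↥D₁ D := Submodule.span ↥D₁ ((V ^ n : Submodule K D) : Set D) with hM
  have hsmul : ∀ (d : ↥D₁) (x : D), d • x = ↑d * x := fun _ _ => rfl
  -- M is stable under right multiplication by V
  have hMV : ∀ m ∈ M, ∀ v ∈ V, m * v ∈ M := by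
    intro m hm
    induction hm using Submodule.span_induction with
    | mem x hx =>
      intro v hv
      have hxv : x * v ∈ (V ^ (n + 1) : Submodule K D) := by
        rw [pow_succ]; exact Submodule.mul_mem_mul hx hv
      exact hstab hxv
    | zero => intro v _; rw [zero_mul]; exact M.zero_mem
    | add x y hx hy ihx ihy => intro v hv; rw [add_mul]; exact M.add_mem (ihx v hv) (ihy v hv)
    | smul d x hx ih =>
      intro v hv
      rw [hsmul, mul_assoc, ← hsmul]
      exact M.smul_mem d (ih v hv)
  -- M is finitely generated over D₁
  obtain ⟨t, ht⟩ := hfg.pow n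
  have hMt : M = Submodule.span ↥D₁ (t : Set D) := by
    apply le_antisymm
    · rw [hM]
      apply Submodule.span_le.mpr
      intro x hx
      have : x ∈ Submodule.span K (t : Set D) := by rw [ht]; exact hx
      obtain ⟨f, hf⟩ := mem_span_finset.mp this
      rw [← hf.2]
      refine sum_mem fun i hi => ?_
      have : f i • i = (⟨algebraMap K D (f i), hD₁.1 (f i)⟩ : ↥D₁) • i := by
        rw [hsmul]; exact Algebra.smul_def _ _
      rw [this]
      exact Submodule.smul_mem _ _ (Submodule.subset_span hi)
    · apply Submodule.span_le.mpr
      intro x hx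
      have : x ∈ (V ^ n : Submodule K D) := by rw [← ht]; exact Submodule.subset_span hx
      exact Submodule.subset_span this
  haveI : FiniteDimensional ↥D₁ ↥M := by
    rw [hMt]
    exact FiniteDimensional.span_of_finite _ t.finite_toSet
  have h1M : (1 : D) ∈ M := Submodule.subset_span (one_mem_pow hV1 n)
  -- the subring E of right multipliers preserving M
  set E : Subring D :=
    { carrier := {x : D | ∀ m ∈ M, m * x ∈ M}
      mul_mem' := fun {x y} hx hy m hm => by
        rw [← mul_assoc]; exact hy _ (hx _ hm)
      one_mem' := fun m hm => by rw [mul_one]; exact hm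
      add_mem' := fun {x y} hx hy m hm => by
        rw [mul_add]; exact M.add_mem (hx _ hm) (hy _ hm)
      zero_mem' := fun m _ => by rw [mul_zero]; exact M.zero_mem
      neg_mem' := fun {x} hx m hm => by rw [mul_neg]; exact M.neg_mem (hx _ hm) } with hE
  have hmemE : ∀ x : D, x ∈ E ↔ ∀ m ∈ M, m * x ∈ M := fun x => Iff.rfl
  have hKE : ∀ c : K, algebraMap K D c ∈ E := by
    intro c
    rw [hmemE]
    intro m hm
    rw [← Algebra.commutes]
    have : algebraMap K D c * m = (⟨algebraMap K D c, hD₁.1 c⟩ : ↥D₁) • m := rfl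
    rw [this]
    exact M.smul_mem _ hm
  have hinvE : ∀ x ∈ E, x⁻¹ ∈ E := by
    intro x hx
    rcases eq_or_ne x 0 with rfl | hx0
    · rw [inv_zero] at *; exact hx
    · rw [hmemE] at hx ⊢
      let φ : ↥M →ₗ[↥D₁] ↥M :=
        { toFun := fun m => ⟨↑m * x, hx _ m.2⟩
          map_add' := fun y z => Subtype.ext (by simp [add_mul])
          map_smul' := fun d y => Subtype.ext (by
            simp only [RingHom.id_apply, SetLike.val_smul]
            rw [hsmul, hsmul, mul_assoc]) }
      have hinj : Function.Injective φ := by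
        intro y z h
        have := congrArg Subtype.val h
        exact Subtype.ext (mul_right_cancel₀ hx0 this)
      intro m hm
      obtain ⟨u, hu⟩ := (LinearMap.injective_iff_surjective.mp hinj) ⟨m, hm⟩
      have hux : (↑u : D) * x = m := congrArg Subtype.val hu
      have : m * x⁻¹ = ↑u := by
        rw [← hux, mul_assoc, mul_inv_cancel₀ hx0, mul_one]
      rw [this]
      exact u.2
  have hS₂E : (S₂ : Set D) ⊆ E := by
    intro s hs
    exact fun m hm => hMV m hm s (hS₂V hs)
  have hD₂E : D₂ ≤ E := hgen₂.2.2 E ⟨hKE, hinvE⟩ hS₂E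
  -- contradiction with hinf₂
  refine hinf₂ ⟨t, ?_, ?_⟩
  · intro x hx
    have : x ∈ (V ^ n : Submodule K D) := by rw [← ht]; exact Submodule.subset_span hx
    exact pow_subset_subring D₂ hgen₂.1.1 V hVD n this
  · intro q hq
    have hqM : q ∈ M := by
      have := (hmemE q).mp (hD₂E hq) 1 h1M
      rwa [one_mul] at this
    rw [hMt] at hqM
    obtain ⟨f, hf⟩ := mem_span_finset.mp hqM
    refine ⟨fun x => ↑(f x), fun x _ => (f x).2, ?_⟩
    rw [← hf.2]
    exact Finset.sum_congr rfl fun x _ => hsmul _ _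

end Aux

/-- The GK dimension estimate in the proof of Theorem 1: if `D₁ ⊆ D₂` are finitely
generated division subalgebras of `D` with `D₁` infinite-dimensional over `K` and `D₂`
infinite-dimensional as a left `D₁`-vector space, then `GKdim D₂ ≥ 2`. -/
theorem stmt10 {K D : Type*} [Field K] [DivisionRing D] [Algebra K D]
    (D₁ D₂ : Subring D)
    (hD₁ : IsDivSub (K := K) D₁) (hD₂ : IsDivSub (K := K) D₂)
    (h12 : D₁ ≤ D₂)
    (hfg₁ : ∃ S : Finset D, IsDivGenBy (K := K) D₁ S)
    (hfg₂ : ∃ S : Finset D, IsDivGenBy (K := K) D₂ S)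
    (hinf₁ : ¬ ∃ s : Finset D, (s : Set D) ⊆ D₁ ∧ ∀ q ∈ D₁, ∃ c : D → K,
      q = ∑ x ∈ s, algebraMap K D (c x) * x)
    (hinf₂ : ¬ ∃ s : Finset D, (s : Set D) ⊆ D₂ ∧ ∀ q ∈ D₂, ∃ c : D → D,
      (∀ x ∈ s, c x ∈ D₁) ∧ q = ∑ x ∈ s, c x * x) :
    (2 : EReal) ≤ gkOfSet K (D₂ : Set D) := by
  classical
  obtain ⟨S₁, hS₁⟩ := hfg₁
  obtain ⟨S₂, hS₂⟩ := hfg₂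
  letI : DivisionRing ↥D₁ := subDivisionRing D₁ hD₁.2
  have hsmul : ∀ (d : ↥D₁) (x : D), d • x = (↑d : D) * x := fun _ _ => rfl
  set U : Submodule K D := Submodule.span K (insert (1 : D) (S₁ : Set D)) with hU
  set V : Submodule K D := Submodule.span K (insert (1 : D) ((S₁ : Set D) ∪ (S₂ : Set D))) with hV
  have hUV : U ≤ V := Submodule.span_mono (Set.insert_subset_insert Set.subset_union_left)
  have h1U : (1 : D) ∈ U := Submodule.subset_span (Set.mem_insert _ _)
  have h1V : (1 : D) ∈ V := Submodule.subset_span (Set.mem_insert _ _)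
  have hS₁U : (S₁ : Set D) ⊆ U := fun x hx =>
    Submodule.subset_span (Set.mem_insert_iff.mpr (Or.inr hx))
  have hS₂V : (S₂ : Set D) ⊆ V := fun x hx =>
    Submodule.subset_span (Set.mem_insert_iff.mpr (Or.inr (Set.mem_union_right _ hx)))
  have hUD₁ : (U : Set D) ⊆ D₁ := by
    rw [hU]
    have : insert (1 : D) (S₁ : Set D) ⊆ D₁ :=
      Set.insert_subset D₁.one_mem hS₁.2.1
    have hle : Submodule.span K (insert (1 : D) (S₁ : Set D)) ≤
        subringSubmodule D₁ hD₁.1 := Submodule.span_le.mpr this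
    exact hle
  have hVD₂ : (V : Set D) ⊆ D₂ := by
    rw [hV]
    have : insert (1 : D) ((S₁ : Set D) ∪ (S₂ : Set D)) ⊆ D₂ :=
      Set.insert_subset D₂.one_mem
        (Set.union_subset (fun x hx => h12 (hS₁.2.1 hx)) hS₂.2.1)
    have hle : Submodule.span K (insert (1 : D) ((S₁ : Set D) ∪ (S₂ : Set D))) ≤
        subringSubmodule D₂ hD₂.1 := Submodule.span_le.mpr this
    exact hle
  have hUfg : U.FG := Submodule.fg_span ((S₁.finite_toSet).insert 1)
  have hVfg : V.FG := Submodule.fg_span (((S₁.finite_toSet).union S₂.finite_toSet).insert 1)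
  haveI hVfin : FiniteDimensional K ↥V := by
    rw [hV]
    exact FiniteDimensional.span_of_finite _ (((S₁.finite_toSet).union S₂.finite_toSet).insert 1)
  -- b-families: K-independent elements inside U^n
  have hb : ∀ n : ℕ, ∃ b : Fin n → D,
      (∀ j, b j ∈ (U ^ n : Submodule K D)) ∧ LinearIndependent K b := by
    intro n
    induction n with
    | zero => exact ⟨fun i => i.elim0, fun i => i.elim0, linearIndependent_empty_type⟩
    | succ n ih =>
      obtain ⟨b, hbmem, hbind⟩ := ih
      have hex : ∃ x, x ∈ (U ^ (n + 1) : Submodule K D) ∧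
          x ∉ Submodule.span K (Set.range b) := by
        by_contra hcon
        push_neg at hcon
        have hle1 : (U ^ (n + 1) : Submodule K D) ≤ Submodule.span K (Set.range b) :=
          fun x hx => hcon x hx
        have hle2 : Submodule.span K (Set.range b) ≤ U ^ n :=
          Submodule.span_le.mpr (Set.range_subset_iff.mpr hbmem)
        exact keyB D₁ hD₁ S₁ hS₁ hinf₁ U h1U hUD₁ hS₁U hUfg n (hle1.trans hle2)
      obtain ⟨x, hxmem, hxnd⟩ := hex
      refine ⟨Fin.snoc b x, ?_, linearIndependent_fin_snoc.mpr ⟨hbind, hxnd⟩⟩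
      intro j
      refine Fin.lastCases ?_ ?_ j
      · simpa using hxmem
      · intro i
        simp only [Fin.snoc_castSucc]
        exact pow_mono_exp h1U (Nat.le_succ n) (hbmem i)
  -- a-families: left-D₁-independent elements inside V^n
  have ha : ∀ n : ℕ, ∃ a : Fin n → D,
      (∀ i, a i ∈ (V ^ n : Submodule K D)) ∧ LinearIndependent ↥D₁ a := by
    intro n
    induction n with
    | zero => exact ⟨fun i => i.elim0, fun i => i.elim0, linearIndependent_empty_type⟩
    | succ n ih =>
      obtain ⟨a, hamem, haind⟩ := ih
      have hex : ∃ x, x ∈ (V ^ (n + 1) : Submodule K D) ∧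
          x ∉ Submodule.span ↥D₁ (Set.range a) := by
        by_contra hcon
        push_neg at hcon
        have hle2 : Submodule.span ↥D₁ (Set.range a) ≤
            Submodule.span ↥D₁ ((V ^ n : Submodule K D) : Set D) :=
          Submodule.span_le.mpr
            (Set.range_subset_iff.mpr fun i => Submodule.subset_span (hamem i))
        refine keyA D₁ D₂ hD₁ S₂ hS₂ hinf₂ V h1V hVD₂ hS₂V hVfg n ?_
        intro x hx
        exact hle2 (hcon x hx)
      obtain ⟨x, hxmem, hxnd⟩ := hex
      refine ⟨Fin.snoc a x, ?_, linearIndependent_fin_snoc.mpr ⟨haind, hxnd⟩⟩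
      intro j
      refine Fin.lastCases ?_ ?_ j
      · simpa using hxmem
      · intro i
        simp only [Fin.snoc_castSucc]
        exact pow_mono_exp h1V (Nat.le_succ n) (hamem i)
  -- counting: finrank K (V ^ (2 n)) ≥ n * n
  have hUnD₁ : ∀ n : ℕ, ((U ^ n : Submodule K D) : Set D) ⊆ D₁ :=
    pow_subset_subring D₁ hD₁.1 U hUD₁
  have hcount : ∀ n : ℕ, (n * n : ℕ) ≤ Module.finrank K ↥(V ^ (2 * n) : Submodule K D) := by
    intro n
    obtain ⟨b, hbmem, hbind⟩ := hb n
    obtain ⟨a, hamem, haind⟩ := ha n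
    set v : Fin n × Fin n → D := fun p => b p.2 * a p.1 with hv
    have hvmem : ∀ p, v p ∈ (V ^ (2 * n) : Submodule K D) := by
      intro p
      have hbV : b p.2 ∈ (V ^ n : Submodule K D) :=
        pow_mono_base hUV n (hbmem p.2)
      have : v p ∈ (V ^ n : Submodule K D) * (V ^ n) :=
        Submodule.mul_mem_mul hbV (hamem p.1)
      rwa [← pow_add, ← two_mul] at this
    have hvind : LinearIndependent K v := by
      rw [Fintype.linearIndependent_iff]
      intro g hg p
      rw [Fintype.sum_prod_type] at hg
      have hrw : ∀ i : Fin n, (∑ j : Fin n, g (i, j) • v (i, j)) =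
          (∑ j : Fin n, g (i, j) • b j) * a i := by
        intro i
        rw [Finset.sum_mul]
        exact Finset.sum_congr rfl fun j _ => (smul_mul_assoc _ _ _).symm
      have hdmem : ∀ i : Fin n, (∑ j : Fin n, g (i, j) • b j) ∈ D₁ := by
        intro i
        refine sum_mem fun j _ => ?_
        rw [Algebra.smul_def]
        exact D₁.mul_mem (hD₁.1 _) (hUnD₁ n (hbmem j))
      set d : Fin n → ↥D₁ := fun i => ⟨∑ j : Fin n, g (i, j) • b j, hdmem i⟩ with hd
      have hsum : ∑ i : Fin n, d i • a i = 0 := by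
        rw [← hg]
        refine Finset.sum_congr rfl fun i _ => ?_
        rw [hrw i, hsmul]
      have hd0 : ∀ i, d i = 0 := Fintype.linearIndependent_iff.mp haind d hsum
      have hgi : ∀ i : Fin n, ∀ j : Fin n, g (i, j) = 0 := by
        intro i
        refine Fintype.linearIndependent_iff.mp hbind (fun j => g (i, j)) ?_
        have := congrArg Subtype.val (hd0 i)
        exact this
      have := hgi p.1 p.2
      rwa [Prod.mk.eta] at this
    haveI : Module.Finite K ↥(V ^ (2 * n) : Submodule K D) :=
      Module.Finite.iff_fg.mpr (hVfg.pow _)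
    have hvind' : LinearIndependent K
        (fun p : Fin n × Fin n => (⟨v p, hvmem p⟩ : ↥(V ^ (2 * n) : Submodule K D))) := by
      refine LinearIndependent.of_comp (V ^ (2 * n) : Submodule K D).subtype ?_
      exact hvind
    have := hvind'.fintype_card_le_finrank
    simpa using this
  -- the analytic estimate
  have hkey : ∀ m : ℕ, 4 ≤ m →
      2 - 2 * Real.log 4 / Real.log m ≤
        Real.log (Module.finrank K ↥(V ^ m : Submodule K D)) / Real.log m := by
    intro m hm4
    have hm0 : (0 : ℝ) < m := by
      have : 0 < m := by omega
      exact_mod_cast this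
    have hm1 : (1 : ℝ) < m := by
      have : 1 < m := by omega
      exact_mod_cast this
    have hlogm : 0 < Real.log m := Real.log_pos hm1
    set n : ℕ := m / 2 with hn
    have h2n : 2 * n ≤ m := by omega
    have hm4n : m ≤ 4 * n := by omega
    haveI : Module.Finite K ↥(V ^ m : Submodule K D) := Module.Finite.iff_fg.mpr (hVfg.pow _)
    have hfr : (n * n : ℕ) ≤ Module.finrank K ↥(V ^ m : Submodule K D) :=
      le_trans (hcount n) (Submodule.finrank_mono (pow_mono_exp h1V h2n))
    have hnpos : (0 : ℝ) < n := by
      have : 0 < n := by omega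
      exact_mod_cast this
    have hfrR : ((n : ℝ) * n) ≤ (Module.finrank K ↥(V ^ m : Submodule K D) : ℝ) := by
      exact_mod_cast hfr
    have hlog1 : Real.log ((n : ℝ) * n) ≤
        Real.log (Module.finrank K ↥(V ^ m : Submodule K D)) :=
      Real.log_le_log (by positivity) hfrR
    have hm4R : (m : ℝ) / 4 ≤ (n : ℝ) := by
      have : (m : ℝ) ≤ 4 * n := by exact_mod_cast hm4n
      linarith
    have hlogn : Real.log ((m : ℝ) / 4) ≤ Real.log n :=
      Real.log_le_log (by positivity) hm4R
    have e1 : Real.log ((n : ℝ) * n) = Real.log n + Real.log n :=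
      Real.log_mul (ne_of_gt hnpos) (ne_of_gt hnpos)
    have e2 : Real.log ((m : ℝ) / 4) = Real.log m - Real.log 4 :=
      Real.log_div (ne_of_gt hm0) (by norm_num)
    have hnum : 2 * Real.log m - 2 * Real.log 4 ≤
        Real.log (Module.finrank K ↥(V ^ m : Submodule K D)) := by
      rw [e1] at hlog1
      rw [e2] at hlogn
      linarith
    have e3 : 2 - 2 * Real.log 4 / Real.log m =
        (2 * Real.log m - 2 * Real.log 4) / Real.log m := by
      field_simp
    rw [e3]
    gcongr
  -- the limit
  have hlog : Filter.Tendsto (fun m : ℕ => Real.log m) atTop atTop :=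
    Real.tendsto_log_atTop.comp tendsto_natCast_atTop_atTop
  have hlim0 : Filter.Tendsto (fun m : ℕ => 2 * Real.log 4 / Real.log m) atTop (nhds 0) :=
    Filter.Tendsto.div_atTop tendsto_const_nhds hlog
  have hlim : Filter.Tendsto (fun m : ℕ => 2 - 2 * Real.log 4 / Real.log m) atTop
      (nhds 2) := by
    have := (tendsto_const_nhds (x := (2 : ℝ)) (f := atTop)).sub hlim0
    simpa using this
  -- conclusion
  have hmem : gkWrt K V ∈ { x : EReal | ∃ W : Submodule K D, FiniteDimensional K ↥W ∧
      (1 : D) ∈ W ∧ (W : Set D) ⊆ (D₂ : Set D) ∧ x = gkWrt K W } :=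
    ⟨V, hVfin, h1V, hVD₂, rfl⟩
  refine le_trans ?_ (le_sSup hmem)
  by_contra hlt
  rw [not_le] at hlt
  obtain ⟨y, hy1, hy2⟩ := EReal.exists_between_coe_real hlt
  have hy2' : (y : ℝ) < 2 := by
    have h2 : ((2 : ℝ) : EReal) = (2 : EReal) := by norm_cast
    rw [← h2] at hy2
    exact EReal.coe_lt_coe_iff.mp hy2
  have hev : ∀ᶠ m : ℕ in atTop, (y : EReal) ≤
      ((Real.log (Module.finrank K ↥(V ^ m : Submodule K D)) / Real.log m : ℝ) : EReal) := by
    have h1 := hlim.eventually (eventually_gt_nhds hy2')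
    filter_upwards [h1, eventually_ge_atTop 4] with m hm1 hm2
    exact EReal.coe_le_coe_iff.mpr (le_trans hm1.le (hkey m hm2))
  have hfin : (y : EReal) ≤ gkWrt K V :=
    Filter.le_limsup_of_frequently_le hev.frequently
  exact absurd hfin (not_le.mpr hy1)
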